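/- The map sending a compact operator on a Banach space to its spectrum (as a subset of ℂ with the Hausdorff distance) is continuous with respect to the operator norm topology. -/

import Mathlib

open Metric Set

namespace SpecCont

variable {X : Type*} [NormedAddCommGroup X] [NormedSpace ℂ X] [CompleteSpace X]

/-- A compact perturbation of a nonzero scalar which is injective is bounded below. -/
lemma bdd_below {T : X →L[ℂ] X} (hT : IsCompactOperator T) {lam : ℂ} (hlam : lam ≠ 0)
    (hinj : Function.Injective ⇑(algebraMap ℂ (X →L[ℂ] X) lam - T)) :
    ∃ c > 0, ∀ x : X, c * ‖x‖ ≤ ‖(algebraMap ℂ (X →L[ℂ] X) lam - T) x‖ := by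
  set A := algebraMap ℂ (X →L[ℂ] X) lam - T with hA
  have hAx : ∀ x : X, A x = lam • x - T x := by
    intro x
    simp [hA, Algebra.algebraMap_eq_smul_one, ContinuousLinearMap.sub_apply]
  by_contra h
  push_neg at h
  have key : ∀ n : ℕ, ∃ x : X, ‖x‖ = 1 ∧ ‖A x‖ < 1 / (n + 1) := by
    intro n
    obtain ⟨x, hx⟩ := h (1 / (n + 1)) (by positivity)
    have hx0 : x ≠ 0 := by
      rintro rfl
      simp at hx
    have hxn : 0 < ‖x‖ := norm_pos_iff.mpr hx0
    refine ⟨((‖x‖ : ℂ))⁻¹ • x, ?_, ?_⟩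
    · rw [norm_smul]
      simp [inv_mul_cancel₀ hxn.ne']
    · rw [map_smul, norm_smul]
      calc ‖((‖x‖ : ℂ))⁻¹‖ * ‖A x‖ = ‖x‖⁻¹ * ‖A x‖ := by simp
        _ < ‖x‖⁻¹ * (1 / (n + 1) * ‖x‖) := mul_lt_mul_of_pos_left hx (by positivity)
        _ = 1 / (n + 1) := by field_simp
  choose u hu1 hu2 using key
  obtain ⟨K, hK, hTK⟩ : ∃ K, IsCompact K ∧ ∀ n, T (u n) ∈ K := by
    refine ⟨closure (T '' closedBall 0 1), hT.isCompact_closure_image_closedBall 1, fun n => ?_⟩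
    exact subset_closure ⟨u n, by simp [hu1 n], rfl⟩
  obtain ⟨y, -, φ, hφ, hy⟩ := hK.tendsto_subseq hTK
  have hA0 : Filter.Tendsto (fun n => A (u (φ n))) Filter.atTop (nhds 0) := by
    rw [tendsto_iff_norm_sub_tendsto_zero]
    refine squeeze_zero (fun n => by positivity) (fun n => ?_)
      tendsto_one_div_add_atTop_nhds_zero_nat
    simp only [sub_zero]
    refine (hu2 (φ n)).le.trans ?_
    have h1 : (n : ℝ) + 1 ≤ (φ n : ℝ) + 1 := by
      have : n ≤ φ n := hφ.le_apply; push_cast; exact_mod_cast by linarith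
    exact div_le_div_of_nonneg_left (by norm_num) (by positivity) h1
  have huφ : Filter.Tendsto (fun n => u (φ n)) Filter.atTop (nhds (lam⁻¹ • y)) := by
    have heq : ∀ n, u (φ n) = lam⁻¹ • (A (u (φ n)) + T (u (φ n))) := by
      intro n
      rw [hAx, sub_add_cancel, smul_smul, inv_mul_cancel₀ hlam, one_smul]
    have h3 : Filter.Tendsto (fun n => lam⁻¹ • (A (u (φ n)) + T (u (φ n))))
        Filter.atTop (nhds (lam⁻¹ • y)) := by
      simpa using ((hA0.add hy).const_smul lam⁻¹)
    exact h3.congr (fun n => (heq n).symm)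
  have hz1 : ‖lam⁻¹ • y‖ = 1 := by
    have h4 : Filter.Tendsto (fun n => ‖u (φ n)‖) Filter.atTop (nhds ‖lam⁻¹ • y‖) :=
      (continuous_norm.tendsto _).comp huφ
    have h5 : Filter.Tendsto (fun _ : ℕ => (1 : ℝ)) Filter.atTop (nhds 1) := tendsto_const_nhds
    exact tendsto_nhds_unique (h4.congr (fun n => by rw [hu1])) h5 |>.symm ▸ rfl
  have hzA : A (lam⁻¹ • y) = 0 := by
    have h2 : Filter.Tendsto (fun n => A (u (φ n))) Filter.atTop (nhds (A (lam⁻¹ • y))) :=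
      (A.continuous.tendsto _).comp huφ
    exact tendsto_nhds_unique h2 hA0
  have h6 : lam⁻¹ • y = 0 := by
    apply hinj
    simpa using hzA
  rw [h6] at hz1
  simp at hz1









lemma closed_range {T : X →L[ℂ] X} (hT : IsCompactOperator T) {lam : ℂ} (hlam : lam ≠ 0)
    (hinj : Function.Injective ⇑(algebraMap ℂ (X →L[ℂ] X) lam - T)) :
    IsClosed (Set.range ⇑(algebraMap ℂ (X →L[ℂ] X) lam - T)) := by
  obtain ⟨c, hc, hbd⟩ := bdd_below hT hlam hinj
  set A := algebraMap ℂ (X →L[ℂ] X) lam - T with hA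
  have halip : AntilipschitzWith (⟨c, hc.le⟩ : NNReal)⁻¹ ⇑A := by
    apply A.antilipschitz_of_bound
    intro x
    have := hbd x
    change ‖x‖ ≤ (c : ℝ)⁻¹ * ‖A x‖
    rw [le_inv_mul_iff₀ (by exact_mod_cast hc)]
    exact_mod_cast (by simpa [mul_comm] using this)
  exact halip.isClosed_range A.uniformContinuous

lemma riesz_step (F G : Submodule ℂ X) (hG : IsClosed (G : Set X)) (hle : G ≤ F)
    (hne : ∃ x ∈ F, x ∉ G) :
    ∃ x : X, x ∈ F ∧ ‖x‖ = 1 ∧ ∀ y ∈ G, (1 : ℝ) / 2 ≤ ‖x - y‖ := by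
  set G' : Submodule ℂ F := G.comap F.subtype with hG'
  have hG'c : IsClosed (G' : Set F) := by
    have : (G' : Set F) = (Subtype.val) ⁻¹' (G : Set X) := rfl
    rw [this]
    exact hG.preimage continuous_subtype_val
  have hex : ∃ x : F, x ∉ G' := by
    obtain ⟨x, hxF, hxG⟩ := hne
    exact ⟨⟨x, hxF⟩, fun h => hxG h⟩
  obtain ⟨x0, hx0, hx0d⟩ := riesz_lemma hG'c hex (by norm_num : (1:ℝ)/2 < 1)
  have hx0n : (x0 : X) ≠ 0 := by
    intro h
    apply hx0
    have : x0 = 0 := Subtype.ext h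
    rw [this]; exact G'.zero_mem
  have hpos : (0 : ℝ) < ‖(x0 : X)‖ := norm_pos_iff.mpr hx0n
  refine ⟨((‖(x0:X)‖ : ℂ))⁻¹ • (x0 : X), F.smul_mem _ x0.2, ?_, ?_⟩
  · rw [norm_smul]; simp [inv_mul_cancel₀ hpos.ne']
  · intro y hy
    have hyF : y ∈ F := hle hy
    have key : (1:ℝ)/2 * ‖(x0 : X)‖ ≤ ‖(x0 : X) - (‖(x0:X)‖ : ℂ) • y‖ := by
      have hmem : ((‖(x0:X)‖ : ℂ) • ⟨y, hyF⟩ : F) ∈ G' := by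
        exact G'.smul_mem _ (by exact hy)
      have := hx0d _ hmem
      calc (1:ℝ)/2 * ‖(x0 : X)‖ = 1/2 * ‖x0‖ := by rw [Submodule.norm_coe]
        _ ≤ ‖x0 - (‖(x0:X)‖ : ℂ) • ⟨y, hyF⟩‖ := this
        _ = ‖(x0 : X) - (‖(x0:X)‖ : ℂ) • y‖ := by rfl
    calc (1:ℝ)/2 = ‖(x0:X)‖⁻¹ * ((1:ℝ)/2 * ‖(x0:X)‖) := by field_simp
      _ ≤ ‖(x0:X)‖⁻¹ * ‖(x0 : X) - (‖(x0:X)‖ : ℂ) • y‖ :=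
          mul_le_mul_of_nonneg_left key (by positivity)
      _ = ‖((‖(x0:X)‖ : ℂ))⁻¹ • ((x0 : X) - (‖(x0:X)‖ : ℂ) • y)‖ := by
          rw [norm_smul]; simp
      _ = ‖((‖(x0:X)‖ : ℂ))⁻¹ • (x0 : X) - y‖ := by
          rw [smul_sub, smul_smul, inv_mul_cancel₀ (by exact_mod_cast hpos.ne'), one_smul]



lemma pow_form {T : X →L[ℂ] X} (hT : IsCompactOperator T) (lam : ℂ) (n : ℕ) :
    ∃ S : X →L[ℂ] X, IsCompactOperator S ∧
      (algebraMap ℂ (X →L[ℂ] X) lam - T) ^ n = algebraMap ℂ (X →L[ℂ] X) (lam ^ n) - S := by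
  induction n with
  | zero => exact ⟨0, isCompactOperator_zero, by simp⟩
  | succ n ih =>
    obtain ⟨S, hS, hE⟩ := ih
    refine ⟨algebraMap ℂ (X →L[ℂ] X) (lam ^ n) * T + S * algebraMap ℂ (X →L[ℂ] X) lam - S * T,
      ?_, ?_⟩
    · have h1 : IsCompactOperator ⇑(algebraMap ℂ (X →L[ℂ] X) (lam ^ n) * T) := by
        have : ⇑(algebraMap ℂ (X →L[ℂ] X) (lam ^ n) * T)
            = ⇑(algebraMap ℂ (X →L[ℂ] X) (lam ^ n)) ∘ ⇑T := by
          ext x; rfl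
        rw [this]
        exact hT.continuous_comp (algebraMap ℂ (X →L[ℂ] X) (lam ^ n)).continuous
      have h2 : IsCompactOperator ⇑(S * algebraMap ℂ (X →L[ℂ] X) lam) := by
        have : ⇑(S * algebraMap ℂ (X →L[ℂ] X) lam)
            = ⇑S ∘ ⇑(algebraMap ℂ (X →L[ℂ] X) lam) := by ext x; rfl
        rw [this]
        exact hS.comp_clm _
      have h3 : IsCompactOperator ⇑(S * T) := by
        have : ⇑(S * T) = ⇑S ∘ ⇑T := by ext x; rfl
        rw [this]
        exact hS.comp_clm _
      have := (h1.add h2).sub h3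
      convert this using 1
      all_goals rfl
    · have hmul : algebraMap ℂ (X →L[ℂ] X) (lam ^ (n + 1))
          = algebraMap ℂ (X →L[ℂ] X) (lam ^ n) * algebraMap ℂ (X →L[ℂ] X) lam := by
        rw [← map_mul, pow_succ]
      rw [pow_succ, hE, hmul]
      noncomm_ring

lemma inj_pow {A : X →L[ℂ] X} (hinj : Function.Injective ⇑A) (n : ℕ) :
    Function.Injective ⇑(A ^ n) := by
  induction n with
  | zero => simpa using Function.injective_id
  | succ n ih =>
    have : ⇑(A ^ (n + 1)) = ⇑(A ^ n) ∘ ⇑A := by rw [pow_succ]; ext x; rfl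
    rw [this]
    exact ih.comp hinj

lemma surj_of_inj {T : X →L[ℂ] X} (hT : IsCompactOperator T) {lam : ℂ} (hlam : lam ≠ 0)
    (hinj : Function.Injective ⇑(algebraMap ℂ (X →L[ℂ] X) lam - T)) :
    Function.Surjective ⇑(algebraMap ℂ (X →L[ℂ] X) lam - T) := by
  by_contra hsurj
  set A : X →L[ℂ] X := algebraMap ℂ (X →L[ℂ] X) lam - T with hA
  have hAx : ∀ x : X, A x = lam • x - T x := by
    intro x
    simp [hA, Algebra.algebraMap_eq_smul_one, ContinuousLinearMap.sub_apply]
  set R : ℕ → Submodule ℂ X := fun n => LinearMap.range ((A ^ n : X →L[ℂ] X) : X →ₗ[ℂ] X) with hR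
  have hinj_n : ∀ n, Function.Injective ⇑(A ^ n) := inj_pow hinj
  have hclosed : ∀ n, IsClosed (R n : Set X) := by
    intro n
    obtain ⟨S, hS, hE⟩ := pow_form hT lam n
    have h1 : (R n : Set X) = Set.range ⇑(algebraMap ℂ (X →L[ℂ] X) (lam ^ n) - S) := by
      rw [hR]
      simp only []
      rw [hE]
      rfl
    rw [h1]
    exact closed_range hS (pow_ne_zero n hlam) (by rw [← hE]; exact hinj_n n)
  have hmono : ∀ m n : ℕ, m ≤ n → R n ≤ R m := by
    intro m n hmn
    obtain ⟨k, rfl⟩ := Nat.exists_eq_add_of_le hmn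
    rintro _ ⟨y, rfl⟩
    exact ⟨(A ^ k) y, by rw [pow_add]; rfl⟩
  have hAmem : ∀ n (x : X), x ∈ R n → A x ∈ R (n + 1) := by
    rintro n _ ⟨y, rfl⟩
    exact ⟨y, by rw [pow_succ']; rfl⟩
  have hstrict : ∀ n, ∃ x ∈ R n, x ∉ R (n + 1) := by
    simp only [Function.Surjective, not_forall] at hsurj
    obtain ⟨w, hw⟩ := hsurj
    push_neg at hw
    intro n
    refine ⟨(A ^ n) w, ⟨w, rfl⟩, ?_⟩
    rintro ⟨v, hv⟩
    have : (A ^ n) (A v) = (A ^ n) w := by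
      rw [← hv, pow_succ]; rfl
    exact hw v (hinj_n n this)
  have hriesz : ∀ n, ∃ x : X, x ∈ R n ∧ ‖x‖ = 1 ∧ ∀ y ∈ R (n + 1), (1:ℝ)/2 ≤ ‖x - y‖ :=
    fun n => riesz_step (R n) (R (n + 1)) (hclosed (n + 1)) (hmono n (n + 1) (by omega))
      (hstrict n)
  choose x hxR hx1 hxd using hriesz
  obtain ⟨K, hK, hTK⟩ : ∃ K, IsCompact K ∧ ∀ n, T (x n) ∈ K := by
    refine ⟨closure (T '' closedBall 0 1), hT.isCompact_closure_image_closedBall 1, fun n => ?_⟩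
    exact subset_closure ⟨x n, by simp [hx1 n], rfl⟩
  obtain ⟨y, -, φ, hφ, hy⟩ := hK.tendsto_subseq hTK
  have hcauchy := hy.cauchySeq
  rw [Metric.cauchySeq_iff] at hcauchy
  obtain ⟨N, hN⟩ := hcauchy (‖lam‖ / 2) (half_pos (norm_pos_iff.mpr hlam))
  have hdist := hN (N + 1) (by omega) N (by omega)
  set n := φ N with hn
  set m := φ (N + 1) with hm
  have hnm : n + 1 ≤ m := hφ (by omega : N < N + 1)
  -- the key estimate
  have hwmem : lam⁻¹ • (A (x n) + lam • x m - A (x m)) ∈ R (n + 1) := by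
    refine Submodule.smul_mem _ _ (Submodule.sub_mem _ (Submodule.add_mem _ ?_ ?_) ?_)
    · exact hAmem n _ (hxR n)
    · exact hmono (n + 1) m hnm (Submodule.smul_mem _ _ (hxR m))
    · exact hmono (n + 1) (m + 1) (by omega) (hAmem m _ (hxR m))
  have hkey : ‖lam‖ / 2 ≤ ‖T (x n) - T (x m)‖ := by
    have heq : T (x n) - T (x m)
        = lam • (x n - lam⁻¹ • (A (x n) + lam • x m - A (x m))) := by
      rw [smul_sub, smul_smul, mul_inv_cancel₀ hlam, one_smul]
      rw [hAx, hAx]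
      abel
    rw [heq, norm_smul]
    have := hxd n _ hwmem
    calc ‖lam‖ / 2 = ‖lam‖ * (1/2) := by ring
      _ ≤ ‖lam‖ * ‖x n - lam⁻¹ • (A (x n) + lam • x m - A (x m))‖ :=
          mul_le_mul_of_nonneg_left this (norm_nonneg _)
  simp only [Function.comp] at hdist
  rw [dist_eq_norm, norm_sub_rev] at hdist
  exact absurd hdist (not_lt.mpr hkey)

lemma eigenvalue_of_mem_spectrum {T : X →L[ℂ] X} (hT : IsCompactOperator T) {lam : ℂ}
    (hlam : lam ≠ 0) (hmem : lam ∈ spectrum ℂ T) : ∃ x : X, x ≠ 0 ∧ T x = lam • x := by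
  by_contra h
  push_neg at h
  set A : X →L[ℂ] X := algebraMap ℂ (X →L[ℂ] X) lam - T with hA
  have hAx : ∀ x : X, A x = lam • x - T x := by
    intro x
    simp [hA, Algebra.algebraMap_eq_smul_one, ContinuousLinearMap.sub_apply]
  have hinj : Function.Injective ⇑A := by
    intro a b hab
    by_contra hne
    have hsub : A (a - b) = 0 := by rw [map_sub, hab, sub_self]
    rw [hAx] at hsub
    rw [sub_eq_zero] at hsub
    exact h (a - b) (sub_ne_zero.mpr hne) hsub.symm
  have hsurj := surj_of_inj hT hlam hinj
  have hunit : IsUnit A := by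
    let e := ContinuousLinearEquiv.ofBijective A (LinearMap.ker_eq_bot.mpr hinj)
      (LinearMap.range_eq_top.mpr hsurj)
    refine ⟨⟨A, (e.symm : X →L[ℂ] X), ?_, ?_⟩, rfl⟩
    · ext x
      simpa [ContinuousLinearMap.mul_apply] using
        ContinuousLinearEquiv.ofBijective_apply_symm_apply A _ _ x
    · ext x
      simpa [ContinuousLinearMap.mul_apply] using
        ContinuousLinearEquiv.ofBijective_symm_apply_apply A _ _ x
  exact spectrum.mem_iff.mp hmem hunit

lemma finite_spectrum_large {T : X →L[ℂ] X} (hT : IsCompactOperator T) {c : ℝ} (hc : 0 < c) :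
    {μ ∈ spectrum ℂ T | c ≤ ‖μ‖}.Finite := by
  by_contra hinf
  set s := {μ ∈ spectrum ℂ T | c ≤ ‖μ‖} with hs
  have hinf' : s.Infinite := hinf
  let f := hinf'.natEmbedding
  set μ : ℕ → ℂ := fun n => (f n : ℂ) with hμ
  have hμinj : Function.Injective μ := fun a b hab => f.injective (Subtype.ext hab)
  have hμmem : ∀ n, μ n ∈ spectrum ℂ T := fun n => (f n).2.1
  have hμc : ∀ n, c ≤ ‖μ n‖ := fun n => (f n).2.2
  have hμ0 : ∀ n, μ n ≠ 0 := by
    intro n h0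
    have := hμc n
    rw [h0, norm_zero] at this
    exact absurd this (not_le.mpr hc)
  have hev : ∀ n, ∃ x : X, x ≠ 0 ∧ T x = μ n • x :=
    fun n => eigenvalue_of_mem_spectrum hT (hμ0 n) (hμmem n)
  choose x hx0 hxe using hev
  have hli : LinearIndependent ℂ x := by
    apply Module.End.eigenvectors_linearIndependent' (↑T : Module.End ℂ X) μ hμinj x
    intro i
    rw [Module.End.hasEigenvector_iff]
    exact ⟨Module.End.mem_eigenspace_iff.mpr (hxe i), hx0 i⟩
  set Y : ℕ → Submodule ℂ X := fun n => Submodule.span ℂ (x '' Set.Iic n) with hY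
  have hYfd : ∀ n, FiniteDimensional ℂ (Y n) :=
    fun n => FiniteDimensional.span_of_finite ℂ ((Set.finite_Iic n).image x)
  have hYclosed : ∀ n, IsClosed (Y n : Set X) := fun n => by
    haveI := hYfd n
    exact Submodule.closed_of_finiteDimensional (Y n)
  have hYmono : ∀ m n : ℕ, m ≤ n → Y m ≤ Y n :=
    fun m n hmn => Submodule.span_mono (Set.image_mono (Set.Iic_subset_Iic.mpr hmn))
  have hxY : ∀ n, x n ∈ Y n :=
    fun n => Submodule.subset_span ⟨n, Set.mem_Iic.mpr le_rfl, rfl⟩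
  have hxnotY : ∀ n, x (n + 1) ∉ Y n := fun n => by
    have := hli.notMem_span_image (s := Set.Iic n) (x := n + 1) (by simp)
    exact this
  have hTY : ∀ n, ∀ y ∈ Y n, T y ∈ Y n := by
    intro n y hy
    have : Submodule.map (↑T : X →ₗ[ℂ] X) (Y n) ≤ Y n := by
      rw [hY]
      simp only [Submodule.map_span]
      apply Submodule.span_le.mpr
      rintro _ ⟨_, ⟨i, hi, rfl⟩, rfl⟩
      have : (↑T : X →ₗ[ℂ] X) (x i) = μ i • x i := hxe i
      rw [this]
      exact Submodule.smul_mem _ _ (Submodule.subset_span ⟨i, hi, rfl⟩)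
    exact this ⟨y, hy, rfl⟩
  have hBY : ∀ n, ∀ y ∈ Y (n + 1), μ (n + 1) • y - T y ∈ Y n := by
    intro n y hy
    set L : X →ₗ[ℂ] X := μ (n + 1) • LinearMap.id - (↑T : X →ₗ[ℂ] X) with hL
    have hLy : L y = μ (n + 1) • y - T y := rfl
    rw [← hLy]
    have hmap : Submodule.map L (Y (n + 1)) ≤ Y n := by
      rw [hY]
      simp only [Submodule.map_span]
      apply Submodule.span_le.mpr
      rintro _ ⟨_, ⟨i, hi, rfl⟩, rfl⟩
      have hLx : L (x i) = (μ (n + 1) - μ i) • x i := by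
        simp [hL, sub_smul, hxe i]
      rw [hLx]
      rcases Nat.lt_or_ge i (n + 1) with hlt | hge
      · exact Submodule.smul_mem _ _
          (Submodule.subset_span ⟨i, Set.mem_Iic.mpr (by omega), rfl⟩)
      · have : i = n + 1 := le_antisymm hi hge
        rw [this, sub_self, zero_smul]
        exact Submodule.zero_mem _
    exact hmap ⟨y, hy, rfl⟩
  -- Riesz sequence
  have hriesz : ∀ n : ℕ, ∃ z : X, z ∈ Y (n + 1) ∧ ‖z‖ = 1 ∧ ∀ w ∈ Y n, (1:ℝ)/2 ≤ ‖z - w‖ := by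
    intro n
    obtain ⟨z, hz⟩ := riesz_step (Y (n + 1)) (Y n) (hYclosed n) (hYmono n (n + 1) (by omega))
      ⟨x (n + 1), hxY (n + 1), hxnotY n⟩
    exact ⟨z, hz⟩
  choose z hzY hz1 hzd using hriesz
  obtain ⟨K, hK, hTK⟩ : ∃ K, IsCompact K ∧ ∀ n, T (z n) ∈ K := by
    refine ⟨closure (T '' closedBall 0 1), hT.isCompact_closure_image_closedBall 1, fun n => ?_⟩
    exact subset_closure ⟨z n, by simp [hz1 n], rfl⟩
  obtain ⟨y, -, φ, hφ, hy⟩ := hK.tendsto_subseq hTK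
  have hcauchy := hy.cauchySeq
  rw [Metric.cauchySeq_iff] at hcauchy
  obtain ⟨N, hN⟩ := hcauchy (c / 2) (by positivity)
  have hdist := hN (N + 1) (by omega) N (by omega)
  set a := φ N with ha
  set b := φ (N + 1) with hb
  have hab : a + 1 ≤ b := hφ (by omega : N < N + 1)
  have hwmem : (μ (b + 1))⁻¹ • ((μ (b + 1) • z b - T (z b)) + T (z a)) ∈ Y b := by
    refine Submodule.smul_mem _ _ (Submodule.add_mem _ ?_ ?_)
    · exact hBY b (z b) (hzY b)
    · exact hYmono (a + 1) b hab (hTY (a + 1) (z a) (hzY a))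
  have hkey : c / 2 ≤ ‖T (z b) - T (z a)‖ := by
    have heq : T (z b) - T (z a)
        = μ (b + 1) • (z b - (μ (b + 1))⁻¹ • ((μ (b + 1) • z b - T (z b)) + T (z a))) := by
      rw [smul_sub, smul_smul, mul_inv_cancel₀ (hμ0 (b + 1)), one_smul]
      abel
    rw [heq, norm_smul]
    have h12 := hzd b _ hwmem
    calc c / 2 = c * (1/2) := by ring
      _ ≤ ‖μ (b + 1)‖ * ((1:ℝ)/2) :=
          mul_le_mul_of_nonneg_right (hμc (b + 1)) (by norm_num)
      _ ≤ ‖μ (b + 1)‖ * ‖z b - (μ (b + 1))⁻¹ • ((μ (b + 1) • z b - T (z b)) + T (z a))‖ :=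
          mul_le_mul_of_nonneg_left h12 (norm_nonneg _)
  simp only [Function.comp] at hdist
  rw [dist_eq_norm] at hdist
  exact absurd hdist (not_lt.mpr hkey)

lemma spectrum_countable {T : X →L[ℂ] X} (hT : IsCompactOperator T) :
    (spectrum ℂ T).Countable := by
  have hsub : spectrum ℂ T
      ⊆ insert 0 (⋃ n : ℕ, {μ ∈ spectrum ℂ T | 1/(n+1 : ℝ) ≤ ‖μ‖}) := by
    intro μ hμ
    rcases eq_or_ne μ 0 with rfl | hμ0
    · exact Set.mem_insert _ _
    · have hpos : 0 < ‖μ‖ := norm_pos_iff.mpr hμ0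
      obtain ⟨n, hn⟩ := exists_nat_gt (1/‖μ‖)
      refine Set.mem_insert_of_mem _ (Set.mem_iUnion.mpr ⟨n, hμ, ?_⟩)
      rw [div_le_iff₀ (by positivity)]
      have h1 : 1 < ‖μ‖ * n := by
        rw [div_lt_iff₀ hpos] at hn
        linarith [hn]
      nlinarith [hpos]
  refine Set.Countable.mono hsub ?_
  refine Set.Countable.insert 0 (Set.countable_iUnion fun n => ?_)
  exact (finite_spectrum_large hT (by positivity : (0:ℝ) < 1/(n+1))).countable

lemma good_radius {s : Set ℂ} (hs : s.Countable) (lam : ℂ) {ε : ℝ} (hε : 0 < ε) :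
    ∃ r : ℝ, 0 < r ∧ r < ε ∧ ∀ μ ∈ s, dist μ lam ≠ r := by
  have hD : ((fun μ => dist μ lam) '' s).Countable := hs.image _
  have hIoo : ¬ (Set.Ioo (0:ℝ) ε).Countable := by
    rw [← Cardinal.le_aleph0_iff_set_countable, Cardinal.mk_Ioo_real hε]
    exact not_le.mpr Cardinal.aleph0_lt_continuum
  have hns : ¬ (Set.Ioo (0:ℝ) ε ⊆ (fun μ => dist μ lam) '' s) :=
    fun h => hIoo (hD.mono h)
  obtain ⟨r, hr, hrD⟩ := Set.not_subset.mp hns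
  exact ⟨r, hr.1, hr.2, fun μ hμ h => hrD ⟨μ, hμ, h⟩⟩

lemma resolvent_bound {T : X →L[ℂ] X} {K : Set ℂ} (hKc : IsCompact K)
    (hKres : ∀ z ∈ K, z ∉ spectrum ℂ T) :
    ∃ M : ℝ, 1 ≤ M ∧ ∀ z ∈ K,
      ‖Ring.inverse (algebraMap ℂ (X →L[ℂ] X) z - T)‖ ≤ M := by
  have hunit : ∀ z ∈ K, IsUnit (algebraMap ℂ (X →L[ℂ] X) z - T) :=
    fun z hz => spectrum.notMem_iff.mp (hKres z hz)
  have hcont : ContinuousOn (fun z => Ring.inverse (algebraMap ℂ (X →L[ℂ] X) z - T)) K := by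
    intro z hz
    apply ContinuousAt.continuousWithinAt
    have h1 : ContinuousAt (fun z : ℂ => algebraMap ℂ (X →L[ℂ] X) z - T) z :=
      ((continuous_algebraMap ℂ (X →L[ℂ] X)).sub continuous_const).continuousAt
    have h2 := NormedRing.inverse_continuousAt (hunit z hz).unit
    rw [IsUnit.unit_spec] at h2
    exact ContinuousAt.comp (g := Ring.inverse) h2 h1
  obtain ⟨M, hM⟩ := hKc.exists_bound_of_continuousOn hcont
  exact ⟨max M 1, le_max_right _ _, fun z hz => (hM z hz).trans (le_max_left _ _)⟩

lemma unit_near [Nontrivial X] {u : (X →L[ℂ] X)ˣ} {v : X →L[ℂ] X} {M : ℝ} (hM : 1 ≤ M)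
    (hu : ‖(↑u⁻¹ : X →L[ℂ] X)‖ ≤ M) (hv : ‖v - ↑u‖ < 1/(4*M)) :
    IsUnit v ∧ ‖Ring.inverse v‖ ≤ 2*M := by
  have hM0 : (0:ℝ) < M := by linarith
  have hui : (0:ℝ) < ‖(↑u⁻¹ : X →L[ℂ] X)‖ := norm_pos_iff.mpr (Units.ne_zero _)
  have hvu : ‖v - ↑u‖ < ‖(↑u⁻¹ : X →L[ℂ] X)‖⁻¹ := by
    have h1 : (1:ℝ)/(4*M) < 1/M := by
      apply div_lt_div_of_pos_left one_pos hM0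
      linarith
    have h2 : (1:ℝ)/M ≤ ‖(↑u⁻¹ : X →L[ℂ] X)‖⁻¹ := by
      rw [one_div]
      exact inv_anti₀ hui hu
    linarith
  have hunit : IsUnit v := (Units.ofNearby u v hvu).isUnit
  refine ⟨hunit, ?_⟩
  set w := Ring.inverse v with hw
  have hvw : v * w = 1 := Ring.mul_inverse_cancel v hunit
  have h2 : (↑u : X →L[ℂ] X) * w = 1 + (↑u - v) * w := by
    rw [sub_mul, hvw]
    abel
  have hid : w = ↑u⁻¹ + ↑u⁻¹ * ((↑u - v) * w) := by
    calc w = ↑u⁻¹ * (↑u * w) := by rw [← mul_assoc, Units.inv_mul, one_mul]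
      _ = ↑u⁻¹ * (1 + (↑u - v) * w) := by rw [h2]
      _ = ↑u⁻¹ + ↑u⁻¹ * ((↑u - v) * w) := by rw [mul_add, mul_one]
  have hnorm : ‖w‖ ≤ M + M * ((1/(4*M)) * ‖w‖) := by
    calc ‖w‖ = ‖(↑u⁻¹ : X →L[ℂ] X) + ↑u⁻¹ * ((↑u - v) * w)‖ := by rw [← hid]
      _ ≤ ‖(↑u⁻¹ : X →L[ℂ] X)‖ + ‖(↑u⁻¹ : X →L[ℂ] X)‖ * (‖(↑u : X →L[ℂ] X) - v‖ * ‖w‖) := by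
          refine (norm_add_le _ _).trans (add_le_add le_rfl ?_)
          exact (norm_mul_le _ _).trans (mul_le_mul_of_nonneg_left
            ((norm_mul_le _ _)) (norm_nonneg _))
      _ ≤ M + M * ((1/(4*M)) * ‖w‖) := by
          have h3 : ‖(↑u : X →L[ℂ] X) - v‖ ≤ 1/(4*M) := by
            rw [norm_sub_rev]; exact hv.le
          have h4 : ‖(↑u : X →L[ℂ] X) - v‖ * ‖w‖ ≤ (1/(4*M)) * ‖w‖ :=
            mul_le_mul_of_nonneg_right h3 (norm_nonneg _)
          have h5 : ‖(↑u⁻¹ : X →L[ℂ] X)‖ * (‖(↑u : X →L[ℂ] X) - v‖ * ‖w‖)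
              ≤ M * ((1/(4*M)) * ‖w‖) := by
            apply mul_le_mul hu h4 (by positivity) hM0.le
          linarith [h5, hu]
  have h6 : M * ((1/(4*M)) * ‖w‖) = ‖w‖ / 4 := by field_simp
  rw [h6] at hnorm
  linarith

lemma upper_semicontinuous [Nontrivial X] (T : X →L[ℂ] X) {ε : ℝ} (hε : 0 < ε) :
    ∃ δ > 0, ∀ S : X →L[ℂ] X, ‖S - T‖ < δ →
      spectrum ℂ S ⊆ Metric.thickening ε (spectrum ℂ T) := by
  set K := closedBall (0:ℂ) (‖T‖ + 1) \ Metric.thickening ε (spectrum ℂ T) with hKdef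
  have hKc : IsCompact K := (isCompact_closedBall _ _).diff Metric.isOpen_thickening
  have hKres : ∀ z ∈ K, z ∉ spectrum ℂ T :=
    fun z hz h => hz.2 (Metric.self_subset_thickening hε _ h)
  obtain ⟨M, hM1, hM⟩ := resolvent_bound hKc hKres
  refine ⟨min 1 (1/(4*M)), by positivity, fun S hS z hz => ?_⟩
  by_contra hzth
  have hz1 : ‖z‖ ≤ ‖S‖ := spectrum.norm_le_norm_of_mem hz
  have hz2 : ‖S‖ ≤ ‖T‖ + 1 := by
    calc ‖S‖ = ‖T + (S - T)‖ := by rw [add_sub_cancel]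
      _ ≤ ‖T‖ + ‖S - T‖ := norm_add_le _ _
      _ ≤ ‖T‖ + 1 := by
          have := hS.trans_le (min_le_left _ _)
          linarith
  have hzK : z ∈ K := ⟨by simpa [mem_closedBall] using hz1.trans hz2, hzth⟩
  obtain ⟨u, hu⟩ : ∃ u : (X →L[ℂ] X)ˣ, (↑u : X →L[ℂ] X) = algebraMap ℂ (X →L[ℂ] X) z - T :=
    ⟨(spectrum.notMem_iff.mp (hKres z hzK)).unit, IsUnit.unit_spec _⟩
  have hub : ‖(↑u⁻¹ : X →L[ℂ] X)‖ ≤ M := by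
    rw [← Ring.inverse_unit u, hu]
    exact hM z hzK
  have hnear : ‖(algebraMap ℂ (X →L[ℂ] X) z - S) - ↑u‖ < 1/(4*M) := by
    have h8 : (algebraMap ℂ (X →L[ℂ] X) z - S) - ↑u = T - S := by
      rw [hu]; abel
    rw [h8, norm_sub_rev]
    exact hS.trans_le (min_le_right _ _)
  have := (unit_near hM1 hub hnear).1
  exact spectrum.notMem_iff.mpr this hz

lemma lower_pt [Nontrivial X] {T : X →L[ℂ] X} (hcnt : (spectrum ℂ T).Countable)
    {lam : ℂ} (hlam : lam ∈ spectrum ℂ T) {ε : ℝ} (hε : 0 < ε) :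
    ∃ δ > 0, ∀ S : X →L[ℂ] X, ‖S - T‖ < δ → ∃ μ ∈ spectrum ℂ S, dist lam μ ≤ ε := by
  obtain ⟨r, hr0, hrε, hrgood⟩ := good_radius hcnt lam hε
  have hsphere : ∀ z ∈ Metric.sphere lam r, z ∉ spectrum ℂ T := by
    intro z hz h
    exact hrgood z h (by rwa [Metric.mem_sphere] at hz)
  obtain ⟨M, hM1, hM⟩ := resolvent_bound (isCompact_sphere lam r) hsphere
  have hM0 : (0:ℝ) < M := by linarith
  refine ⟨1/(4*M), by positivity, fun S hS => ?_⟩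
  by_contra hno
  push_neg at hno
  have hball : ∀ z ∈ closedBall lam r, z ∉ spectrum ℂ S := by
    intro z hz h
    have h1 := hno z h
    rw [mem_closedBall] at hz
    rw [dist_comm] at hz
    linarith
  set g : ℂ → X →L[ℂ] X := fun z => Ring.inverse (algebraMap ℂ (X →L[ℂ] X) z - S) with hg
  have hdiff : ∀ z ∈ closedBall lam r, DifferentiableAt ℂ g z := by
    intro z hz
    obtain ⟨u, hu⟩ : ∃ u : (X →L[ℂ] X)ˣ, (↑u : X →L[ℂ] X) = algebraMap ℂ (X →L[ℂ] X) z - S :=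
      ⟨(spectrum.notMem_iff.mp (hball z hz)).unit, IsUnit.unit_spec _⟩
    have h1 : DifferentiableAt ℂ (fun w : ℂ => algebraMap ℂ (X →L[ℂ] X) w - S) z := by
      have heq : (fun w : ℂ => algebraMap ℂ (X →L[ℂ] X) w - S)
          = fun w : ℂ => w • (1 : X →L[ℂ] X) - S := by
        funext w
        rw [Algebra.algebraMap_eq_smul_one]
      rw [heq]
      exact (differentiableAt_id.smul_const (1 : X →L[ℂ] X)).sub_const S
    have h2 : DifferentiableAt ℂ Ring.inverse (algebraMap ℂ (X →L[ℂ] X) z - S) := by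
      rw [← hu]
      exact (hasFDerivAt_ringInverse u).differentiableAt
    exact h2.comp z h1
  have hbound : ∀ z ∈ Metric.sphere lam r, ‖g z‖ ≤ 2*M := by
    intro z hz
    obtain ⟨u, hu⟩ : ∃ u : (X →L[ℂ] X)ˣ, (↑u : X →L[ℂ] X) = algebraMap ℂ (X →L[ℂ] X) z - T :=
      ⟨(spectrum.notMem_iff.mp (hsphere z hz)).unit, IsUnit.unit_spec _⟩
    have hub : ‖(↑u⁻¹ : X →L[ℂ] X)‖ ≤ M := by
      rw [← Ring.inverse_unit u, hu]
      exact hM z hz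
    have hnear : ‖(algebraMap ℂ (X →L[ℂ] X) z - S) - ↑u‖ < 1/(4*M) := by
      have h8 : (algebraMap ℂ (X →L[ℂ] X) z - S) - ↑u = T - S := by rw [hu]; abel
      rw [h8, norm_sub_rev]
      exact hS
    exact (unit_near hM1 hub hnear).2
  have hmax : ‖g lam‖ ≤ 2*M := by
    have hd : DiffContOnCl ℂ g (ball lam r) := by
      apply DifferentiableOn.diffContOnCl
      intro z hz
      exact (hdiff z (closure_ball_subset_closedBall hz)).differentiableWithinAt
    have hfr : ∀ z ∈ frontier (ball lam r), ‖g z‖ ≤ 2*M := by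
      intro z hz
      rw [frontier_ball lam hr0.ne'] at hz
      exact hbound z hz
    exact Complex.norm_le_of_forall_mem_frontier_norm_le isBounded_ball hd hfr
      (by rw [closure_ball lam hr0.ne']; exact mem_closedBall_self hr0.le)
  -- now lam - T is invertible: contradiction
  have hunit0 : IsUnit (algebraMap ℂ (X →L[ℂ] X) lam - S) :=
    spectrum.notMem_iff.mp (hball lam (mem_closedBall_self hr0.le))
  obtain ⟨u0, hu0⟩ : ∃ u : (X →L[ℂ] X)ˣ, (↑u : X →L[ℂ] X) = algebraMap ℂ (X →L[ℂ] X) lam - S :=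
    ⟨hunit0.unit, hunit0.unit_spec⟩
  have hub0 : ‖(↑u0⁻¹ : X →L[ℂ] X)‖ ≤ 2*M := by
    rw [← Ring.inverse_unit u0, hu0]
    exact hmax
  have hui0 : (0:ℝ) < ‖(↑u0⁻¹ : X →L[ℂ] X)‖ := norm_pos_iff.mpr (Units.ne_zero _)
  have hnear0 : ‖(algebraMap ℂ (X →L[ℂ] X) lam - T) - ↑u0‖ < ‖(↑u0⁻¹ : X →L[ℂ] X)‖⁻¹ := by
    have h9 : (algebraMap ℂ (X →L[ℂ] X) lam - T) - ↑u0 = S - T := by rw [hu0]; abel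
    rw [h9]
    have h10 : (1:ℝ)/(2*M) ≤ ‖(↑u0⁻¹ : X →L[ℂ] X)‖⁻¹ := by
      rw [one_div]
      exact inv_anti₀ hui0 hub0
    have h11 : (1:ℝ)/(4*M) < 1/(2*M) := by
      apply div_lt_div_of_pos_left one_pos (by positivity)
      linarith
    linarith [hS]
  exact spectrum.notMem_iff.mpr (Units.ofNearby u0 _ hnear0).isUnit hlam

lemma lower_uniform [Nontrivial X] {T : X →L[ℂ] X} (hT : IsCompactOperator T) {ε : ℝ}
    (hε : 0 < ε) :
    ∃ δ > 0, ∀ S : X →L[ℂ] X, ‖S - T‖ < δ →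
      ∀ lam ∈ spectrum ℂ T, ∃ μ ∈ spectrum ℂ S, dist lam μ ≤ ε := by
  have hcnt := spectrum_countable hT
  have hcomp : IsCompact (spectrum ℂ T) := spectrum.isCompact T
  obtain ⟨t, hts, htf, hcov⟩ := hcomp.elim_finite_subcover_image (b := spectrum ℂ T)
    (c := fun i => ball i (ε/2)) (fun i _ => isOpen_ball)
    (fun z hz => Set.mem_biUnion hz (mem_ball_self (by positivity)))
  have hch : ∀ i ∈ t, ∃ δ, 0 < δ ∧ ∀ S : X →L[ℂ] X, ‖S - T‖ < δ →
      ∃ μ ∈ spectrum ℂ S, dist i μ ≤ ε/2 := by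
    intro i hi
    obtain ⟨δ, hδ0, hδ⟩ := lower_pt hcnt (hts hi) (by positivity : (0:ℝ) < ε/2)
    exact ⟨δ, hδ0, hδ⟩
  choose! δf hδf0 hδf using hch
  rcases t.eq_empty_or_nonempty with rfl | htne
  · exact ⟨1, one_pos, fun S hS lam hlam => absurd (hcov hlam) (by simp)⟩
  · obtain ⟨i0, hi0, hmin⟩ := Set.exists_min_image t δf htf htne
    refine ⟨δf i0, hδf0 i0 hi0, fun S hS lam hlam => ?_⟩
    obtain ⟨i, hi, hlami⟩ := Set.mem_iUnion₂.mp (hcov hlam)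
    obtain ⟨μ, hμ, hdist⟩ := hδf i hi S (hS.trans_le (hmin i hi))
    refine ⟨μ, hμ, ?_⟩
    have hlt : dist lam i < ε/2 := mem_ball.mp hlami
    calc dist lam μ ≤ dist lam i + dist i μ := dist_triangle _ _ _
      _ ≤ ε/2 + ε/2 := add_le_add hlt.le hdist
      _ = ε := by ring

end SpecCont


/-- The map sending a compact operator on a complex Banach space to its spectrum
(a subset of ℂ, with the Hausdorff distance) is continuous with respect to the
operator norm topology, stated in ε-δ form. -/
theorem spectrum_continuous_on_compact_operators
    (X : Type*) [NormedAddCommGroup X] [NormedSpace ℂ X] [CompleteSpace X]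
    (T : X →L[ℂ] X) (hT : IsCompactOperator T) :
    ∀ ε > 0, ∃ δ > 0, ∀ S : X →L[ℂ] X, IsCompactOperator S → ‖S - T‖ < δ →
      Metric.hausdorffDist (spectrum ℂ S) (spectrum ℂ T) < ε := by
  intro ε hε
  rcases subsingleton_or_nontrivial X with hsub | hnt
  · refine ⟨1, one_pos, fun S hSc hS => ?_⟩
    have hempty : ∀ R : X →L[ℂ] X, spectrum ℂ R = ∅ := by
      haveI : Subsingleton (X →L[ℂ] X) :=
        ⟨fun f g => ContinuousLinearMap.ext fun x => Subsingleton.elim _ _⟩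
      intro R
      ext z
      simp [spectrum.mem_iff, isUnit_of_subsingleton]
    rw [hempty, hempty]
    simpa [Metric.hausdorffDist_empty] using hε
  · obtain ⟨δ₁, hδ₁0, hδ₁⟩ := SpecCont.upper_semicontinuous T (half_pos hε)
    obtain ⟨δ₂, hδ₂0, hδ₂⟩ := SpecCont.lower_uniform hT (half_pos hε)
    refine ⟨min δ₁ δ₂, lt_min hδ₁0 hδ₂0, fun S hSc hS => ?_⟩
    have h1 := hδ₁ S (hS.trans_le (min_le_left _ _))
    have h2 := hδ₂ S (hS.trans_le (min_le_right _ _))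
    have hH : Metric.hausdorffDist (spectrum ℂ S) (spectrum ℂ T) ≤ ε/2 := by
      apply Metric.hausdorffDist_le_of_mem_dist (by positivity)
      · intro x hx
        obtain ⟨y, hy, hxy⟩ := Metric.mem_thickening_iff.mp (h1 hx)
        exact ⟨y, hy, hxy.le⟩
      · intro y hy
        obtain ⟨μ, hμ, hdist⟩ := h2 y hy
        exact ⟨μ, hμ, hdist⟩
    linarith
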